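/- If V is a framed vertex operator algebra with Virasoro frame T_n and D is its 1/16-code, then every codeword β in D has weight divisible by 8 (i.e., D is triply even). -/
import Mathlib


/-- Hamming weight of a binary word. -/
def wt {ι : Type*} [Fintype ι] (x : ι → ZMod 2) : ℕ :=
  (Finset.univ.filter fun i => x i ≠ 0).card

/-- If `V` is a framed VOA with Virasoro frame `T_n` and `D` is its `1/16`-code, then every
codeword `β ∈ D` has weight divisible by `8`.  The framed-VOA input is abstracted as follows:
for each `β ∈ D` there is an irreducible `T_n`-submodule `L(1/2,h_1) ⊗ ⋯ ⊗ L(1/2,h_n)` of `V`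
with `τ = β`, i.e. `h i = 1/16` exactly when `β i = 1` and `h i ∈ {0, 1/2}` otherwise; since
`V` is `ℤ`-graded, the top weight `∑ i, h i` of this module is an integer. -/
theorem weight_one_sixteenth_code_triply_even (n : ℕ) (D : Set (Fin n → ZMod 2))
    (hframe : ∀ β ∈ D, ∃ h : Fin n → ℚ,
      (∀ i, if β i = 1 then h i = 1/16 else (h i = 0 ∨ h i = 1/2)) ∧
      ∃ k : ℤ, ∑ i, h i = (k : ℚ)) :
    ∀ β ∈ D, 8 ∣ wt β := by
  classical
  intro β hβ
  obtain ⟨h, hh, k, hk⟩ := hframe β hβ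
  have hone : ∀ x : ZMod 2, x ≠ 0 ↔ x = 1 := by decide
  set A : Finset (Fin n) := Finset.univ.filter (fun i => β i ≠ 0) with hAdef
  set C : Finset (Fin n) :=
    (Finset.univ.filter (fun i => ¬ β i ≠ 0)).filter (fun i => h i = 1/2) with hCdef
  have hsplit : ∑ i, h i = ∑ i ∈ A, h i + ∑ i ∈ Finset.univ.filter (fun i => ¬ β i ≠ 0), h i :=
    (Finset.sum_filter_add_sum_filter_not _ _ _).symm
  have hAsum : ∑ i ∈ A, h i = (A.card : ℚ) * (1/16) := by
    rw [Finset.sum_congr rfl (fun i hi => ?_), Finset.sum_const, nsmul_eq_mul]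
    have hb : β i = 1 := (hone _).1 (Finset.mem_filter.1 hi).2
    simpa [hb] using hh i
  have hBsum : ∑ i ∈ Finset.univ.filter (fun i => ¬ β i ≠ 0), h i = (C.card : ℚ) * (1/2) := by
    rw [← Finset.sum_filter_add_sum_filter_not _ (fun i => h i = 1/2), ← hCdef]
    have h2 : ∑ i ∈ (Finset.univ.filter (fun i => ¬ β i ≠ 0)).filter (fun i => ¬ h i = 1/2),
        h i = 0 := by
      refine Finset.sum_eq_zero fun i hi => ?_
      have hi1 := Finset.mem_filter.1 hi
      have hi2 := Finset.mem_filter.1 hi1.1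
      have hb : ¬ β i = 1 := by
        intro hb1
        exact hi2.2 (by simp [hb1])
      have := hh i
      rw [if_neg hb] at this
      rcases this with h0 | h5
      · exact h0
      · exact absurd h5 hi1.2
    rw [h2, add_zero, Finset.sum_congr rfl (fun i hi => (Finset.mem_filter.1 hi).2),
      Finset.sum_const, nsmul_eq_mul]
  have hwt : (wt β : ℚ) = (A.card : ℚ) := by rw [wt, hAdef]
  have hq : (wt β : ℚ) = 16 * (k : ℚ) - 8 * (C.card : ℚ) := by
    rw [hwt]
    have := hk
    rw [hsplit, hAsum, hBsum] at this
    linarith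
  have hz : (wt β : ℤ) = 8 * (2 * k - (C.card : ℤ)) := by
    have : ((wt β : ℤ) : ℚ) = ((8 * (2 * k - (C.card : ℤ)) : ℤ) : ℚ) := by
      push_cast
      push_cast at hq
      linarith
    exact_mod_cast this
  have : (8 : ℤ) ∣ (wt β : ℤ) := ⟨2 * k - (C.card : ℤ), hz⟩
  exact_mod_cast this
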